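/- Every L-BDD map is L-BLD: if f : X → Y is a branched covering between metric spaces such that L⁻¹·diam(α) ≤ diam(f∘α) ≤ L·diam(α) for all non-constant curves α in X, then L⁻¹·ℓ(α) ≤ ℓ(f∘α) ≤ L·ℓ(α) for all non-constant curves α in X, where ℓ denotes curve length. -/

import Mathlib

/-- Discreteness of fibers. -/
def DiscreteFibers {X Y : Type*} [TopologicalSpace X] (f : X → Y) : Prop :=
  ∀ y : Y, DiscreteTopology (f ⁻¹' {y} : Set X)

/-- Locally bounded multiplicity. -/
def LocallyBoundedMultiplicity {X Y : Type*} [TopologicalSpace X] (f : X → Y) : Prop :=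
  ∀ x : X, ∃ U ∈ nhds x, ∃ M : ℕ, ∀ y : Y, (f ⁻¹' {y} ∩ U).encard ≤ M

/-- A branched covering: continuous, open, discrete, of locally bounded multiplicity. -/
def IsBranchedCovering {X Y : Type*} [TopologicalSpace X] [TopologicalSpace Y]
    (f : X → Y) : Prop :=
  Continuous f ∧ IsOpenMap f ∧ DiscreteFibers f ∧ LocallyBoundedMultiplicity f

open Set
open scoped ENNReal

/-- The diameter of the image of a curve is at most its variation. -/
lemma diam_image_le_eVariationOn {E : Type*} [PseudoEMetricSpace E] (g : ℝ → E) (s t : ℝ) :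
    EMetric.diam (g '' Icc s t) ≤ eVariationOn g (Icc s t) := by
  apply EMetric.diam_le
  rintro _ ⟨x, hx, rfl⟩ _ ⟨y, hy, rfl⟩
  exact eVariationOn.edist_le g hx hy

lemma Icc_add_Icc' {E : Type*} [PseudoEMetricSpace E] (g : ℝ → E) {a b c : ℝ}
    (hab : a ≤ b) (hbc : b ≤ c) :
    eVariationOn g (Icc a b) + eVariationOn g (Icc b c) = eVariationOn g (Icc a c) := by
  have := eVariationOn.Icc_add_Icc g (s := univ) hab hbc (mem_univ b)
  simpa using this

lemma sum_eVariationOn_le {E : Type*} [PseudoEMetricSpace E] (g : ℝ → E) {a b : ℝ}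
    (u : ℕ → ℝ) (hu : Monotone u) (hm : ∀ i, u i ∈ Icc a b) (n : ℕ) :
    ∑ i ∈ Finset.range n, eVariationOn g (Icc (u i) (u (i + 1))) ≤ eVariationOn g (Icc a b) := by
  have key : ∀ n, ∑ i ∈ Finset.range n, eVariationOn g (Icc (u i) (u (i + 1)))
      ≤ eVariationOn g (Icc a (u n)) := by
    intro n
    induction n with
    | zero => simp
    | succ n ih =>
      rw [Finset.sum_range_succ]
      calc _ ≤ eVariationOn g (Icc a (u n)) + eVariationOn g (Icc (u n) (u (n + 1))) :=
              add_le_add_left ih _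
        _ = eVariationOn g (Icc a (u (n + 1))) :=
              Icc_add_Icc' g (hm n).1 (hu (Nat.le_succ n))
  exact (key n).trans (eVariationOn.mono g (Icc_subset_Icc le_rfl (hm n).2))

/-- Key lemma: if each nonconstant subarc of `g` has endpoint distance bounded by `C` times
the variation of `h` on that subinterval, then the variation of `g` is bounded by `C` times
the variation of `h`. -/
lemma eVariationOn_le_of_subarc {E F : Type*} [PseudoEMetricSpace E] [PseudoEMetricSpace F]
    (g : ℝ → E) (h : ℝ → F) (a b : ℝ) (C : ℝ≥0∞)
    (H : ∀ s t, a ≤ s → s < t → t ≤ b → g s ≠ g t →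
      edist (g t) (g s) ≤ C * eVariationOn h (Icc s t)) :
    eVariationOn g (Icc a b) ≤ C * eVariationOn h (Icc a b) := by
  rw [eVariationOn]
  apply iSup_le
  rintro ⟨n, u, hu, hm⟩
  calc ∑ i ∈ Finset.range n, edist (g (u (i + 1))) (g (u i))
      ≤ ∑ i ∈ Finset.range n, C * eVariationOn h (Icc (u i) (u (i + 1))) := by
        apply Finset.sum_le_sum
        intro i _
        by_cases heq : g (u i) = g (u (i + 1))
        · simp [heq]
        · have hlt : u i < u (i + 1) := by
            rcases lt_or_eq_of_le (hu (Nat.le_succ i)) with h' | h'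
            · exact h'
            · exact absurd (congrArg g h') heq
          exact H (u i) (u (i + 1)) (hm i).1 hlt (hm (i + 1)).2 heq
    _ = C * ∑ i ∈ Finset.range n, eVariationOn h (Icc (u i) (u (i + 1))) := by
        rw [Finset.mul_sum]
    _ ≤ C * eVariationOn h (Icc a b) :=
        mul_le_mul_right (sum_eVariationOn_le h u hu hm n) C

/-- Every `L`-BDD branched covering is `L`-BLD: the two-sided diameter distortion bound
on all non-constant curves implies the two-sided length distortion bound. -/
theorem stmt_5 {X Y : Type*} [MetricSpace X] [MetricSpace Y] (f : X → Y)
    (hbc : IsBranchedCovering f) (L : ℝ) (hL : 1 ≤ L)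
    (hBDD : ∀ a b : ℝ, a < b → ∀ α : ℝ → X, ContinuousOn α (Set.Icc a b) →
      (∃ s ∈ Set.Icc a b, ∃ t ∈ Set.Icc a b, α s ≠ α t) →
      EMetric.diam (α '' Set.Icc a b)
          ≤ ENNReal.ofReal L * EMetric.diam ((f ∘ α) '' Set.Icc a b) ∧
      EMetric.diam ((f ∘ α) '' Set.Icc a b)
          ≤ ENNReal.ofReal L * EMetric.diam (α '' Set.Icc a b)) :
    ∀ a b : ℝ, a < b → ∀ α : ℝ → X, ContinuousOn α (Set.Icc a b) →
      (∃ s ∈ Set.Icc a b, ∃ t ∈ Set.Icc a b, α s ≠ α t) →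
      eVariationOn α (Set.Icc a b)
          ≤ ENNReal.ofReal L * eVariationOn (f ∘ α) (Set.Icc a b) ∧
      eVariationOn (f ∘ α) (Set.Icc a b)
          ≤ ENNReal.ofReal L * eVariationOn α (Set.Icc a b) := by
  intro a b hab α hcont _
  have hsub : ∀ s t : ℝ, a ≤ s → t ≤ b → ContinuousOn α (Set.Icc s t) :=
    fun s t hs ht => hcont.mono (Icc_subset_Icc hs ht)
  constructor
  · apply eVariationOn_le_of_subarc
    intro s t hs hst ht hne
    have hb := hBDD s t hst α (hsub s t hs ht)
      ⟨s, ⟨le_rfl, hst.le⟩, t, ⟨hst.le, le_rfl⟩, hne⟩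
    calc edist (α t) (α s)
        ≤ EMetric.diam (α '' Icc s t) :=
          EMetric.edist_le_diam_of_mem (mem_image_of_mem α ⟨hst.le, le_rfl⟩)
            (mem_image_of_mem α ⟨le_rfl, hst.le⟩)
      _ ≤ ENNReal.ofReal L * EMetric.diam ((f ∘ α) '' Icc s t) := hb.1
      _ ≤ ENNReal.ofReal L * eVariationOn (f ∘ α) (Icc s t) :=
          mul_le_mul_right (diam_image_le_eVariationOn _ s t) _
  · apply eVariationOn_le_of_subarc
    intro s t hs hst ht hne
    have hne' : α s ≠ α t := fun h => hne (congrArg f h)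
    have hb := hBDD s t hst α (hsub s t hs ht)
      ⟨s, ⟨le_rfl, hst.le⟩, t, ⟨hst.le, le_rfl⟩, hne'⟩
    calc edist ((f ∘ α) t) ((f ∘ α) s)
        ≤ EMetric.diam ((f ∘ α) '' Icc s t) :=
          EMetric.edist_le_diam_of_mem (mem_image_of_mem _ ⟨hst.le, le_rfl⟩)
            (mem_image_of_mem _ ⟨le_rfl, hst.le⟩)
      _ ≤ ENNReal.ofReal L * EMetric.diam (α '' Icc s t) := hb.2
      _ ≤ ENNReal.ofReal L * eVariationOn α (Icc s t) :=
          mul_le_mul_right (diam_image_le_eVariationOn _ s t) _
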